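/- Let I and J be ideals of R = ℂ[x,y] with 𝔪·I ⊆ J ⊆ I and dim_ℂ R/J finite. Set n = dim_ℂ R/I and r = dim_ℂ I/J. Then n ≥ r(r-1)/2. -/

import Mathlib

open MvPolynomial

noncomputable section

/-- The polynomial ring `R = ℂ[x,y]`. -/
abbrev Rpoly : Type := MvPolynomial (Fin 2) ℂ

/-- The maximal ideal `𝔪 = ⟨x, y⟩` of `R` at the origin. -/
def mIdeal : Ideal Rpoly := Ideal.span {X 0, X 1}

/-- `dim_ℂ I/J` for ideals `J ⊆ I`, computed as the ℂ-dimension of the image of `I`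
in `R/J`. -/
noncomputable def relDim (I J : Ideal Rpoly) : ℕ :=
  Module.finrank ℂ (Submodule.restrictScalars ℂ (I.map (Ideal.Quotient.mk J)))

namespace StmtAux

lemma degree_fin2 (u : Fin 2 →₀ ℕ) : u.degree = u 0 + u 1 := by
  rw [Finsupp.degree_apply]
  rw [Finset.sum_subset (Finset.subset_univ u.support)]
  · exact Fin.sum_univ_two u
  · intro i _ hi
    simpa using Finsupp.notMem_support_iff.mp hi

/-- Polynomials all of whose monomials have degree `≥ t` ("order at least `t`"). -/
def Ksub (t : ℕ) : Submodule ℂ Rpoly where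
  carrier := {p | ∀ u : Fin 2 →₀ ℕ, u.degree < t → coeff u p = 0}
  add_mem' := by intro a b ha hb u hu; simp [coeff_add, ha u hu, hb u hu]
  zero_mem' := by intro u hu; simp
  smul_mem' := by intro c p hp u hu; simp [MvPolynomial.coeff_smul, hp u hu]

lemma mem_Ksub {t : ℕ} {p : Rpoly} :
    p ∈ Ksub t ↔ ∀ u : Fin 2 →₀ ℕ, u.degree < t → coeff u p = 0 := Iff.rfl

lemma Ksub_zero : (Ksub 0) = ⊤ := by
  ext p; simp [mem_Ksub]

lemma Ksub_succ_le (t : ℕ) : Ksub (t + 1) ≤ Ksub t := by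
  intro p hp u hu
  exact hp u (by omega)

lemma hc_eq_zero_of_mem_Ksub {p : Rpoly} {s t : ℕ} (hp : p ∈ Ksub t) (h : s < t) :
    homogeneousComponent s p = 0 := by
  ext u
  rw [coeff_homogeneousComponent]
  split
  · next he => exact hp u (he ▸ h)
  · simp

lemma mem_Ksub_succ {p : Rpoly} {t : ℕ} (hp : p ∈ Ksub t) (h : homogeneousComponent t p = 0) :
    p ∈ Ksub (t + 1) := by
  intro u hu
  rcases Nat.lt_or_ge u.degree t with h' | h'
  · exact hp u h'
  · have hut : u.degree = t := by omega
    have := congrArg (coeff u) h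
    rwa [coeff_homogeneousComponent, if_pos hut, MvPolynomial.coeff_zero] at this

lemma X_mul_mem_Ksub {p : Rpoly} {t : ℕ} (i : Fin 2) (hp : p ∈ Ksub t) :
    X i * p ∈ Ksub (t + 1) := by
  intro u hu
  rw [coeff_X_mul']
  split
  · next hi =>
    apply hp
    have := Finsupp.mem_support_iff.mp hi
    rw [degree_fin2] at hu ⊢
    rw [Finsupp.tsub_apply, Finsupp.tsub_apply]
    fin_cases i <;> simp [Finsupp.single_apply] at this ⊢ <;> omega
  · rfl

lemma hc_X_mul (i : Fin 2) (t : ℕ) (p : Rpoly) :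
    homogeneousComponent (t + 1) (X i * p) = X i * homogeneousComponent t p := by
  ext u
  rw [coeff_homogeneousComponent, coeff_X_mul', coeff_X_mul']
  by_cases hi : i ∈ u.support
  · rw [if_pos hi, if_pos hi, coeff_homogeneousComponent]
    have hui := Finsupp.mem_support_iff.mp hi
    have hdeg : (u - Finsupp.single i 1).degree = u.degree - 1 ∧ 1 ≤ u.degree := by
      rw [degree_fin2, degree_fin2, Finsupp.tsub_apply, Finsupp.tsub_apply]
      fin_cases i <;> simp [Finsupp.single_apply] at hui ⊢ <;> omega
    by_cases hd : u.degree = t + 1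
    · rw [if_pos hd, if_pos (by omega)]
    · rw [if_neg hd, if_neg (by omega)]
  · rw [if_neg hi, if_neg hi]
    simp




/-- the monomial `x^i y^(t-i)` exponent -/
def mono (t : ℕ) (i : Fin (t + 1)) : Fin 2 →₀ ℕ :=
  Finsupp.single 0 (i : ℕ) + Finsupp.single 1 (t - (i : ℕ))

lemma mono_apply0 (t : ℕ) (i : Fin (t + 1)) : mono t i 0 = (i : ℕ) := by
  simp [mono, Finsupp.single_apply]

lemma mono_apply1 (t : ℕ) (i : Fin (t + 1)) : mono t i 1 = t - (i : ℕ) := by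
  simp [mono, Finsupp.single_apply]

lemma mono_degree (t : ℕ) (i : Fin (t + 1)) : (mono t i).degree = t := by
  rw [degree_fin2, mono_apply0, mono_apply1]
  have := i.isLt
  omega

lemma eq_mono {t : ℕ} {u : Fin 2 →₀ ℕ} (h : u.degree = t) :
    u = mono t ⟨u 0, by rw [degree_fin2] at h; omega⟩ := by
  ext j
  rw [degree_fin2] at h
  fin_cases j
  · show u 0 = mono t ⟨u 0, by omega⟩ 0
    rw [mono_apply0]
  · show u 1 = mono t ⟨u 0, by omega⟩ 1
    rw [mono_apply1]; simp; omega

/-- coordinates of a polynomial w.r.t. the degree-`t` monomials -/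
def coords (t : ℕ) : ↥(homogeneousSubmodule (Fin 2) ℂ t) →ₗ[ℂ] (Fin (t + 1) → ℂ) where
  toFun p := fun i => coeff (mono t i) (p : Rpoly)
  map_add' p q := by ext i; simp
  map_smul' c p := by ext i; simp

lemma coords_bijective (t : ℕ) : Function.Bijective (coords t) := by
  constructor
  · intro p q h
    ext u
    by_cases hu : u.degree = t
    · have := congrFun h ⟨u 0, by rw [degree_fin2] at hu; omega⟩
      simpa [coords, ← eq_mono hu] using this
    · have hp := (mem_homogeneousSubmodule _ _).mp p.2
      have hq := (mem_homogeneousSubmodule _ _).mp q.2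
      rw [hp.coeff_eq_zero hu, hq.coeff_eq_zero hu]
  · intro c
    refine ⟨⟨∑ i : Fin (t + 1), monomial (mono t i) (c i), ?_⟩, ?_⟩
    · exact Submodule.sum_mem _ fun i _ =>
        (mem_homogeneousSubmodule _ _).mpr (isHomogeneous_monomial _ (mono_degree t i))
    · funext i
      show coeff (mono t i) (∑ j : Fin (t + 1), monomial (mono t j) (c j)) = c i
      rw [MvPolynomial.coeff_sum]
      rw [Finset.sum_eq_single i]
      · simp [coeff_monomial]
      · intro j _ hj
        rw [coeff_monomial, if_neg]
        intro he
        have : (mono t j) 0 = (mono t i) 0 := by rw [he]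
        rw [mono_apply0, mono_apply0] at this
        exact hj (Fin.ext this)
      · intro h; exact absurd (Finset.mem_univ i) h

def homEquiv (t : ℕ) : ↥(homogeneousSubmodule (Fin 2) ℂ t) ≃ₗ[ℂ] (Fin (t + 1) → ℂ) :=
  LinearEquiv.ofBijective (coords t) (coords_bijective t)

instance homFD (t : ℕ) : FiniteDimensional ℂ ↥(homogeneousSubmodule (Fin 2) ℂ t) :=
  Module.Finite.equiv (homEquiv t).symm

lemma finrank_hom (t : ℕ) :
    Module.finrank ℂ ↥(homogeneousSubmodule (Fin 2) ℂ t) = t + 1 := by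
  rw [(homEquiv t).finrank_eq]
  simp




/-- multiplication by `X i` as a `ℂ`-linear map -/
def mulX (i : Fin 2) : Rpoly →ₗ[ℂ] Rpoly := LinearMap.mulLeft ℂ (X i)

lemma mulX_apply (i : Fin 2) (p : Rpoly) : mulX i p = X i * p := rfl

lemma mulX_injective (i : Fin 2) : Function.Injective (mulX i) := by
  intro a b h
  exact mul_left_cancel₀ (X_ne_zero i) h

lemma coeff_X_pow_mul_self (i : Fin 2) (k : ℕ) (u : Fin 2 →₀ ℕ) (p : Rpoly) :
    coeff (Finsupp.single i k + u) (X i ^ k * p) = coeff u p := by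
  induction k with
  | zero => simp
  | succ k ih =>
    have h1 : Finsupp.single i (k + 1) + u = Finsupp.single i 1 + (Finsupp.single i k + u) := by
      rw [← add_assoc, ← Finsupp.single_add]
      ring_nf
    rw [h1, pow_succ, mul_comm (X i ^ k) (X i), mul_assoc, coeff_X_mul, ih]

lemma coeff_X_pow_mul_eq_zero {i : Fin 2} {k : ℕ} {v : Fin 2 →₀ ℕ} {p : Rpoly}
    (h : v i < k) : coeff v (X i ^ k * p) = 0 := by
  induction k generalizing v p with
  | zero => omega
  | succ k ih =>
    rw [pow_succ, mul_comm (X i ^ k) (X i), mul_assoc, coeff_X_mul']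
    split
    · next hi =>
      apply ih
      rw [Finsupp.tsub_apply, Finsupp.single_apply, if_pos rfl]
      have := Finsupp.mem_support_iff.mp hi
      omega
    · rfl

lemma div_bot {t : ℕ} {V : Submodule ℂ Rpoly}
    (hV : V ≤ homogeneousSubmodule (Fin 2) ℂ t)
    (h : V.map (mulX 1) ≤ V.map (mulX 0)) : V = ⊥ := by
  have key : ∀ k : ℕ, ∀ p ∈ V, ∃ q ∈ V, X 1 ^ k * p = X 0 ^ k * q := by
    intro k
    induction k with
    | zero => intro p hp; exact ⟨p, hp, by simp⟩
    | succ k ih =>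
      intro p hp
      have h1 : X 1 * p ∈ V.map (mulX 0) := h ⟨p, hp, rfl⟩
      obtain ⟨q₁, hq₁, hq₁e⟩ := h1
      obtain ⟨q₂, hq₂, hq₂e⟩ := ih q₁ hq₁
      refine ⟨q₂, hq₂, ?_⟩
      rw [mulX_apply] at hq₁e
      calc X 1 ^ (k+1) * p = X 1 ^ k * (X 1 * p) := by ring
        _ = X 1 ^ k * (X 0 * q₁) := by rw [hq₁e]
        _ = X 0 * (X 1 ^ k * q₁) := by ring
        _ = X 0 * (X 0 ^ k * q₂) := by rw [hq₂e]
        _ = X 0 ^ (k+1) * q₂ := by ring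
  rw [Submodule.eq_bot_iff]
  intro p hp
  by_contra hne
  obtain ⟨u, hu⟩ := Finset.nonempty_iff_ne_empty.mpr
    (fun h => hne (MvPolynomial.support_eq_empty.mp h))
  have hcu : coeff u p ≠ 0 := MvPolynomial.mem_support_iff.mp hu
  have hdeg : u.degree = t := by
    by_contra hd
    exact hcu (((mem_homogeneousSubmodule _ _).mp (hV hp)).coeff_eq_zero hd)
  obtain ⟨q, hq, he⟩ := key (t + 1) p hp
  have h1 : coeff (Finsupp.single 1 (t + 1) + u) (X 1 ^ (t + 1) * p) = coeff u p :=
    coeff_X_pow_mul_self 1 (t + 1) u p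
  have h2 : coeff (Finsupp.single 1 (t + 1) + u) (X 0 ^ (t + 1) * q) = 0 := by
    apply coeff_X_pow_mul_eq_zero
    rw [degree_fin2] at hdeg
    simp [Finsupp.add_apply, Finsupp.single_apply]
    omega
  rw [he, h2] at h1
  exact hcu h1.symm


lemma map_mulX_le_hom {t : ℕ} {V : Submodule ℂ Rpoly}
    (hV : V ≤ homogeneousSubmodule (Fin 2) ℂ t) (i : Fin 2) :
    V.map (mulX i) ≤ homogeneousSubmodule (Fin 2) ℂ (t + 1) := by
  rintro z ⟨p, hp, rfl⟩
  rw [mem_homogeneousSubmodule]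
  rw [mulX_apply]
  have : (1 : ℕ) + t = t + 1 := by omega
  exact this ▸ (isHomogeneous_X ℂ i).mul ((mem_homogeneousSubmodule _ _).mp (hV hp))

lemma grow {t : ℕ} {V : Submodule ℂ Rpoly}
    (hV : V ≤ homogeneousSubmodule (Fin 2) ℂ t) (hne : V ≠ ⊥) :
    Module.finrank ℂ ↥V + 1 ≤ Module.finrank ℂ ↥(V.map (mulX 0) ⊔ V.map (mulX 1)) := by
  have hsup : V.map (mulX 0) ⊔ V.map (mulX 1) ≤ homogeneousSubmodule (Fin 2) ℂ (t + 1) :=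
    sup_le (map_mulX_le_hom hV 0) (map_mulX_le_hom hV 1)
  haveI : FiniteDimensional ℂ ↥(V.map (mulX 0) ⊔ V.map (mulX 1)) :=
    Submodule.finiteDimensional_of_le hsup
  have heq : Module.finrank ℂ ↥(V.map (mulX 0)) = Module.finrank ℂ ↥V :=
    (Submodule.equivMapOfInjective (mulX 0) (mulX_injective 0) V).finrank_eq.symm
  have hlt : V.map (mulX 0) < V.map (mulX 0) ⊔ V.map (mulX 1) := by
    rcases lt_or_eq_of_le (le_sup_left : V.map (mulX 0) ≤ _) with h | h
    · exact h
    · exfalso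
      apply hne
      exact div_bot hV (h ▸ le_sup_right)
  have := Submodule.finrank_lt_finrank_of_lt hlt
  omega

variable (I J : Ideal Rpoly)

/-- elements of `I` of order `≥ t` -/
def Psub (t : ℕ) : Submodule ℂ Rpoly := (Submodule.restrictScalars ℂ I) ⊓ Ksub t

/-- degree-`t` initial forms of elements of `I` of order `≥ t` -/
def Vsub (t : ℕ) : Submodule ℂ Rpoly :=
  (Psub I t).map (homogeneousComponent t : Rpoly →ₗ[ℂ] Rpoly)

/-- the quotient map `R → R/J` as a `ℂ`-linear map -/
def mkL : Rpoly →ₗ[ℂ] Rpoly ⧸ J := (Ideal.Quotient.mkₐ ℂ J).toLinearMap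

lemma mkL_apply (p : Rpoly) : mkL J p = Ideal.Quotient.mk J p := rfl

/-- image in `R/J` of the elements of `I` of order `≥ t` -/
def Fsub (t : ℕ) : Submodule ℂ (Rpoly ⧸ J) := (Psub I t).map (mkL J)

lemma Psub_succ_le (t : ℕ) : Psub I (t + 1) ≤ Psub I t :=
  inf_le_inf le_rfl (Ksub_succ_le t)

lemma Fsub_succ_le (t : ℕ) : Fsub I J (t + 1) ≤ Fsub I J t :=
  Submodule.map_mono (Psub_succ_le I t)

lemma Vsub_le_hom (t : ℕ) : Vsub I t ≤ homogeneousSubmodule (Fin 2) ℂ t := by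
  rintro z ⟨p, _, rfl⟩
  exact homogeneousComponent_mem t p

instance Vsub_fd (t : ℕ) : FiniteDimensional ℂ ↥(Vsub I t) :=
  Submodule.finiteDimensional_of_le (Vsub_le_hom I t)

lemma finrank_Vsub_le (t : ℕ) : Module.finrank ℂ ↥(Vsub I t) ≤ t + 1 :=
  (Submodule.finrank_mono (Vsub_le_hom I t)).trans_eq (finrank_hom t)

lemma X_mem_mIdeal (i : Fin 2) : X i ∈ mIdeal := by
  apply Ideal.subset_span
  fin_cases i <;> simp

/-- If the space of degree-`t` initial forms is zero, the order filtration stalls. -/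
lemma Psub_stall {t : ℕ} (h : Vsub I t = ⊥) : Psub I t = Psub I (t + 1) := by
  apply le_antisymm
  · intro p hp
    refine ⟨hp.1, mem_Ksub_succ hp.2 ?_⟩
    have : homogeneousComponent t p ∈ Vsub I t := ⟨p, hp, rfl⟩
    rw [h] at this
    simpa using this
  · exact Psub_succ_le I t

/-- Propagation: nonvanishing of initial forms propagates upward. -/
lemma Vsub_ne_bot_succ {t : ℕ} (h : Vsub I t ≠ ⊥) : Vsub I (t + 1) ≠ ⊥ := by
  obtain ⟨z, hz, hzne⟩ := (Submodule.ne_bot_iff _).mp h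
  obtain ⟨p, hp, rfl⟩ := hz
  intro hbot
  have hX : X 0 * p ∈ Psub I (t + 1) :=
    ⟨Submodule.smul_mem _ _ hp.1, X_mul_mem_Ksub 0 hp.2⟩
  have : homogeneousComponent (t + 1) (X 0 * p) ∈ Vsub I (t + 1) := ⟨X 0 * p, hX, rfl⟩
  rw [hbot, Submodule.mem_bot, hc_X_mul] at this
  exact hzne (by
    rcases mul_eq_zero.mp this with h0 | h0
    · exact absurd h0 (X_ne_zero 0)
    · exact h0)

lemma Vsub_ne_bot_ge {d t : ℕ} (h : Vsub I d ≠ ⊥) (ht : d ≤ t) : Vsub I t ≠ ⊥ := by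
  induction t with
  | zero => rwa [Nat.le_zero.mp ht] at h
  | succ t ih =>
    rcases Nat.lt_or_ge d (t + 1) with h' | h'
    · exact Vsub_ne_bot_succ I (ih (by omega))
    · rwa [Nat.le_antisymm ht h'] at h

/-- mult. by the variables maps initial forms of `I` into initial forms of `J`. -/
lemma claim2 (hmJ : mIdeal * I ≤ J) {t : ℕ} (h : Vsub I t ≠ ⊥) :
    Module.finrank ℂ ↥(Vsub I t) + 1 ≤ Module.finrank ℂ ↥(Vsub J (t + 1)) := by
  have hle : (Vsub I t).map (mulX 0) ⊔ (Vsub I t).map (mulX 1) ≤ Vsub J (t + 1) := by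
    refine sup_le ?_ ?_
    · rintro z ⟨w, ⟨p, hp, rfl⟩, rfl⟩
      exact ⟨X 0 * p, ⟨hmJ (Ideal.mul_mem_mul (X_mem_mIdeal 0) hp.1), X_mul_mem_Ksub 0 hp.2⟩,
        (hc_X_mul 0 t p)⟩
    · rintro z ⟨w, ⟨p, hp, rfl⟩, rfl⟩
      exact ⟨X 1 * p, ⟨hmJ (Ideal.mul_mem_mul (X_mem_mIdeal 1) hp.1), X_mul_mem_Ksub 1 hp.2⟩,
        (hc_X_mul 1 t p)⟩
  exact (grow (Vsub_le_hom I t) h).trans (Submodule.finrank_mono hle)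

lemma Psub_le_PsubJ (hJI : J ≤ I) (t : ℕ) : Psub J t ≤ Psub I t :=
  inf_le_inf (fun p hp => hJI hp) le_rfl

set_option maxHeartbeats 1000000 in
set_option synthInstance.maxHeartbeats 1000000 in
lemma step (hJI : J ≤ I) [FiniteDimensional ℂ (Rpoly ⧸ J)] (t : ℕ) :
    Module.finrank ℂ ↥(Fsub I J t) + Module.finrank ℂ ↥(Vsub J t) ≤
      Module.finrank ℂ ↥(Fsub I J (t + 1)) + Module.finrank ℂ ↥(Vsub I t) := by
  classical
  have hVJI : Vsub J t ≤ Vsub I t := Submodule.map_mono (Psub_le_PsubJ I J hJI t)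
  set VJ' : Submodule ℂ ↥(Vsub I t) := (Vsub J t).comap (Vsub I t).subtype with hVJ'def
  let f : ↥(Psub I t) →ₗ[ℂ] Rpoly ⧸ J := (mkL J).comp (Psub I t).subtype
  let hcV : ↥(Psub I t) →ₗ[ℂ] ↥(Vsub I t) :=
    LinearMap.codRestrict (Vsub I t)
      ((homogeneousComponent t : Rpoly →ₗ[ℂ] Rpoly).comp (Psub I t).subtype)
      (fun m => ⟨(m : Rpoly), m.2, rfl⟩)
  let θ : ↥(Psub I t) →ₗ[ℂ] (↥(Vsub I t) ⧸ VJ') := VJ'.mkQ.comp hcV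
  let h : ↥(Psub I t) →ₗ[ℂ] (Rpoly ⧸ J) × (↥(Vsub I t) ⧸ VJ') := f.prod θ
  let τ : ↥(LinearMap.range h) →ₗ[ℂ] (↥(Vsub I t) ⧸ VJ') :=
    (LinearMap.snd ℂ _ _).comp (LinearMap.range h).subtype
  -- (A)
  have hA : Module.finrank ℂ ↥(Fsub I J t) ≤ Module.finrank ℂ ↥(LinearMap.range h) := by
    have h1 : (LinearMap.range h).map (LinearMap.fst ℂ _ _) = LinearMap.range f := by
      rw [← LinearMap.range_comp, LinearMap.fst_prod]
    have h2 : LinearMap.range f = Fsub I J t := by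
      show LinearMap.range ((mkL J).comp (Psub I t).subtype) = _
      rw [LinearMap.range_comp, Submodule.range_subtype]
      rfl
    calc Module.finrank ℂ ↥(Fsub I J t)
        = Module.finrank ℂ ↥((LinearMap.range h).map (LinearMap.fst ℂ _ _)) := by rw [h1, h2]
      _ ≤ Module.finrank ℂ ↥(LinearMap.range h) := Submodule.finrank_map_le _ _
  -- (B) rank-nullity
  have hB := LinearMap.finrank_range_add_finrank_ker τ
  -- (C)
  have hC : Module.finrank ℂ ↥(LinearMap.range τ) ≤
      Module.finrank ℂ (↥(Vsub I t) ⧸ VJ') := Submodule.finrank_le _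
  -- (D)
  have hD : Module.finrank ℂ ↥(LinearMap.ker τ) = Module.finrank ℂ ↥(Fsub I J (t + 1)) := by
    let ι : ↥(LinearMap.ker τ) →ₗ[ℂ] (Rpoly ⧸ J) :=
      (LinearMap.fst ℂ _ _).comp ((LinearMap.range h).subtype.comp (LinearMap.ker τ).subtype)
    have hinj : Function.Injective ι := by
      intro a b hab
      have ha : ((a : ↥(LinearMap.range h)) : (Rpoly ⧸ J) × (↥(Vsub I t) ⧸ VJ')).2 = 0 :=
        LinearMap.mem_ker.mp a.2
      have hb : ((b : ↥(LinearMap.range h)) : (Rpoly ⧸ J) × (↥(Vsub I t) ⧸ VJ')).2 = 0 :=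
        LinearMap.mem_ker.mp b.2
      apply Subtype.ext
      apply Subtype.ext
      exact Prod.ext hab (ha.trans hb.symm)
    have hrange : LinearMap.range ι = Fsub I J (t + 1) := by
      ext z
      constructor
      · rintro ⟨⟨⟨zz, hzrange⟩, hzker⟩, rfl⟩
        obtain ⟨m, hm⟩ := hzrange
        have hz2 : zz.2 = 0 := LinearMap.mem_ker.mp hzker
        have hθ : θ m = 0 := by rw [show θ m = zz.2 from congrArg Prod.snd hm]; exact hz2
        have hmem : hcV m ∈ VJ' := by
          rwa [← Submodule.Quotient.mk_eq_zero, ← Submodule.mkQ_apply]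
        have : homogeneousComponent t (m : Rpoly) ∈ Vsub J t := hmem
        obtain ⟨q, hq, hqe⟩ := this
        have hp' : (m : Rpoly) - q ∈ Psub I (t + 1) := by
          constructor
          · exact Submodule.sub_mem _ m.2.1 (hJI hq.1)
          · apply mem_Ksub_succ (Submodule.sub_mem _ m.2.2 hq.2)
            rw [map_sub, hqe, sub_self]
        refine ⟨(m : Rpoly) - q, hp', ?_⟩
        have hq0 : mkL J q = 0 := by
          rw [mkL_apply, Ideal.Quotient.eq_zero_iff_mem]; exact hq.1
        have : ι ⟨⟨zz, ⟨m, hm⟩⟩, hzker⟩ = zz.1 := rfl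
        rw [this, map_sub, hq0, sub_zero]
        exact congrArg Prod.fst hm
      · rintro ⟨p, hp, rfl⟩
        let m : ↥(Psub I t) := ⟨p, Psub_succ_le I t hp⟩
        have hθ : θ m = 0 := by
          have h0 : hcV m = 0 := by
            apply Subtype.ext
            show homogeneousComponent t p = 0
            exact hc_eq_zero_of_mem_Ksub hp.2 (Nat.lt_succ_self t)
          show VJ'.mkQ (hcV m) = 0
          rw [h0, map_zero]
        refine ⟨⟨⟨h m, LinearMap.mem_range_self h m⟩, LinearMap.mem_ker.mpr ?_⟩, rfl⟩
        show (h m).2 = 0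
        exact hθ
    haveI : FiniteDimensional ℂ ↥(LinearMap.range h) := inferInstance
    calc Module.finrank ℂ ↥(LinearMap.ker τ)
        = Module.finrank ℂ ↥(LinearMap.range ι) := (LinearEquiv.ofInjective ι hinj).finrank_eq
      _ = Module.finrank ℂ ↥(Fsub I J (t + 1)) := by rw [hrange]
  -- (E)
  have hE := Submodule.finrank_quotient_add_finrank VJ'
  -- (F)
  have hF : Module.finrank ℂ ↥VJ' = Module.finrank ℂ ↥(Vsub J t) :=
    (Submodule.comapSubtypeEquivOfLe hVJI).finrank_eq
  omega

lemma Ksub_le_pow (t : ℕ) : Ksub t ≤ Submodule.restrictScalars ℂ (mIdeal ^ t) := by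
  intro p hp
  show p ∈ mIdeal ^ t
  rw [MvPolynomial.as_sum p]
  apply Ideal.sum_mem
  intro u hu
  have hdeg : t ≤ u.degree := by
    by_contra hlt
    exact (MvPolynomial.mem_support_iff.mp hu) (hp u (by omega))
  have hmono : monomial u (coeff u p) = C (coeff u p) * (X 0 ^ (u 0) * X 1 ^ (u 1)) := by
    rw [monomial_eq]
    congr 1
    rw [Finsupp.prod_fintype _ _ (fun i => pow_zero _)]
    exact Fin.prod_univ_two _
  rw [hmono]
  apply Ideal.mul_mem_left
  have hmem : X (0 : Fin 2) ^ (u 0) * X 1 ^ (u 1) ∈ mIdeal ^ (u 0 + u 1) := by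
    rw [pow_add]
    exact Ideal.mul_mem_mul (Ideal.pow_mem_pow (X_mem_mIdeal 0) _)
      (Ideal.pow_mem_pow (X_mem_mIdeal 1) _)
  exact Ideal.pow_le_pow_right (by rw [degree_fin2] at hdeg; omega) hmem

lemma exists_vanish (hmJ : mIdeal * I ≤ J) : ∃ T, ∀ t, T ≤ t → Fsub I J t = ⊥ := by
  obtain ⟨k, hk⟩ := Ideal.exists_pow_inf_eq_pow_smul mIdeal (I : Submodule Rpoly Rpoly)
  refine ⟨k + 1, fun t ht => ?_⟩
  rw [Submodule.eq_bot_iff]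
  rintro z ⟨p, hp, rfl⟩
  have hpm : p ∈ mIdeal ^ (k + 1) • (⊤ : Submodule Rpoly Rpoly) ⊓ (I : Submodule Rpoly Rpoly) := by
    constructor
    · have h1 : p ∈ mIdeal ^ t := Ksub_le_pow t hp.2
      have h2 : p ∈ mIdeal ^ (k + 1) := Ideal.pow_le_pow_right ht h1
      have h3 : p = p • (1 : Rpoly) := by simp
      exact h3 ▸ Submodule.smul_mem_smul h2 Submodule.mem_top
    · exact hp.1
  rw [hk (k + 1) (by omega)] at hpm
  have hJ : p ∈ J := by
    have hle : mIdeal ^ (k + 1 - k) • (mIdeal ^ k • (⊤ : Submodule Rpoly Rpoly) ⊓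
        (I : Submodule Rpoly Rpoly)) ≤ Submodule.restrictScalars Rpoly (J) := by
      apply Submodule.smul_le.mpr
      intro r hr nn hn
      have hk1 : k + 1 - k = 1 := by omega
      rw [hk1, pow_one] at hr
      show r • nn ∈ J
      rw [smul_eq_mul]
      exact hmJ (Ideal.mul_mem_mul hr hn.2)
    exact hle hpm
  show mkL J p ∈ (⊥ : Submodule ℂ (Rpoly ⧸ J))
  rw [Submodule.mem_bot, mkL_apply, Ideal.Quotient.eq_zero_iff_mem]
  exact hJ

lemma Fsub_zero : Fsub I J 0 = Submodule.restrictScalars ℂ (I.map (Ideal.Quotient.mk J)) := by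
  ext z
  constructor
  · rintro ⟨p, hp, rfl⟩
    exact Ideal.mem_map_of_mem _ hp.1
  · intro hz
    rw [Submodule.restrictScalars_mem,
      Ideal.mem_map_iff_of_surjective _ Ideal.Quotient.mk_surjective] at hz
    obtain ⟨p, hp, rfl⟩ := hz
    exact ⟨p, ⟨hp, fun u hu => absurd hu (Nat.not_lt_zero _)⟩, rfl⟩

lemma L2 {M A B : Type*} [AddCommGroup M] [Module ℂ M] [AddCommGroup A] [Module ℂ A]
    [AddCommGroup B] [Module ℂ B] [FiniteDimensional ℂ A]
    (f : M →ₗ[ℂ] A) (g : M →ₗ[ℂ] B) (hf : Function.Surjective f)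
    (hg : Function.Surjective g) (hker : LinearMap.ker f ≤ LinearMap.ker g) :
    Module.finrank ℂ B ≤ Module.finrank ℂ A := by
  have e1 := LinearMap.quotKerEquivOfSurjective f hf
  have e2 := LinearMap.quotKerEquivOfSurjective g hg
  haveI : FiniteDimensional ℂ (M ⧸ LinearMap.ker f) := Module.Finite.equiv e1.symm
  let q : (M ⧸ LinearMap.ker f) →ₗ[ℂ] (M ⧸ LinearMap.ker g) :=
    Submodule.mapQ _ _ LinearMap.id hker
  have hq : Function.Surjective q := by
    intro x
    obtain ⟨m, rfl⟩ := Submodule.mkQ_surjective _ x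
    exact ⟨Submodule.mkQ _ m, rfl⟩
  have hrank := LinearMap.finrank_range_le q
  rw [LinearMap.range_eq_top.mpr hq, finrank_top] at hrank
  calc Module.finrank ℂ B = Module.finrank ℂ (M ⧸ LinearMap.ker g) := e2.finrank_eq.symm
    _ ≤ Module.finrank ℂ (M ⧸ LinearMap.ker f) := hrank
    _ = Module.finrank ℂ A := e1.finrank_eq

lemma gauss (d : ℕ) : 2 * (∑ i ∈ Finset.range d, (i + 1)) = d * (d + 1) := by
  induction d with
  | zero => simp
  | succ e ih =>
    rw [Finset.sum_range_succ, Nat.mul_add, ih]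
    ring

lemma n_bound {d : ℕ} [FiniteDimensional ℂ (Rpoly ⧸ I)]
    (h : Submodule.restrictScalars ℂ I ≤ Ksub d) :
    d * (d + 1) / 2 ≤ Module.finrank ℂ (Rpoly ⧸ I) := by
  classical
  let B := (t : Fin d) → ↥(homogeneousSubmodule (Fin 2) ℂ (t : ℕ))
  let g : Rpoly →ₗ[ℂ] B := LinearMap.pi (fun t => LinearMap.codRestrict _
    (homogeneousComponent ((t : ℕ)) : Rpoly →ₗ[ℂ] Rpoly) (fun p => homogeneousComponent_mem _ p))
  have hg : Function.Surjective g := by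
    intro b
    refine ⟨∑ t : Fin d, ((b t : Rpoly)), ?_⟩
    funext s
    apply Subtype.ext
    show homogeneousComponent ((s : ℕ)) (∑ t : Fin d, ((b t : Rpoly))) = (b s : Rpoly)
    rw [map_sum, Finset.sum_eq_single s]
    · rw [homogeneousComponent_of_mem (b s).2, if_pos rfl]
    · intro t _ hts
      rw [homogeneousComponent_of_mem (b t).2, if_neg (fun he => hts (Fin.ext he.symm))]
    · intro hs; exact absurd (Finset.mem_univ s) hs
  have hker : LinearMap.ker (mkL I) ≤ LinearMap.ker g := by
    intro p hp
    have hpI : p ∈ I := by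
      rw [LinearMap.mem_ker, mkL_apply, Ideal.Quotient.eq_zero_iff_mem] at hp
      exact hp
    have hpK : p ∈ Ksub d := h hpI
    rw [LinearMap.mem_ker]
    funext s
    apply Subtype.ext
    show homogeneousComponent ((s : ℕ)) p = (0 : B) s
    rw [hc_eq_zero_of_mem_Ksub hpK s.isLt]
    rfl
  have hsur : Function.Surjective (mkL I) := Ideal.Quotient.mkₐ_surjective ℂ I
  have hle := L2 (mkL I) g hsur hg hker
  have hB : Module.finrank ℂ B = ∑ t : Fin d, ((t : ℕ) + 1) := by
    rw [Module.finrank_pi_fintype]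
    exact Finset.sum_congr rfl (fun t _ => finrank_hom (t : ℕ))
  have hsum : 2 * (∑ t : Fin d, ((t : ℕ) + 1)) = d * (d + 1) := by
    rw [Fin.sum_univ_eq_sum_range (fun i => i + 1) d]
    exact gauss d
  rw [hB] at hle
  omega

lemma quot_fd (hJI : J ≤ I) [FiniteDimensional ℂ (Rpoly ⧸ J)] :
    FiniteDimensional ℂ (Rpoly ⧸ I) := by
  let φ : (Rpoly ⧸ J) →ₐ[ℂ] (Rpoly ⧸ I) := Ideal.Quotient.liftₐ J (Ideal.Quotient.mkₐ ℂ I)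
    (fun a ha => by
      rw [Ideal.Quotient.mkₐ_eq_mk, Ideal.Quotient.eq_zero_iff_mem]
      exact hJI ha)
  have hs : Function.Surjective φ := by
    intro x
    obtain ⟨p, rfl⟩ := Ideal.Quotient.mkₐ_surjective ℂ I x
    refine ⟨Ideal.Quotient.mkₐ ℂ J p, ?_⟩
    have hc := AlgHom.congr_fun (Ideal.Quotient.liftₐ_comp J (Ideal.Quotient.mkₐ ℂ I)
      (fun a ha => by
        rw [Ideal.Quotient.mkₐ_eq_mk, Ideal.Quotient.eq_zero_iff_mem]
        exact hJI ha)) p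
    rw [AlgHom.comp_apply] at hc
    exact hc
  exact Module.Finite.of_surjective φ.toLinearMap hs

lemma telescope (hJI : J ≤ I) [FiniteDimensional ℂ (Rpoly ⧸ J)] (d : ℕ) :
    ∀ T, d ≤ T →
      Module.finrank ℂ ↥(Fsub I J d) + ∑ t ∈ Finset.Ico d T, Module.finrank ℂ ↥(Vsub J t) ≤
      Module.finrank ℂ ↥(Fsub I J T) + ∑ t ∈ Finset.Ico d T, Module.finrank ℂ ↥(Vsub I t) := by
  intro T
  refine Nat.le_induction ?_ ?_ T
  · simp
  · intro T hdT ih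
    rw [Finset.sum_Ico_succ_top hdT, Finset.sum_Ico_succ_top hdT]
    have hstep := step I J hJI T
    omega

lemma Fsub_eq_of_bot {d : ℕ} (h : ∀ t, t < d → Vsub I t = ⊥) :
    Fsub I J 0 = Fsub I J d := by
  induction d with
  | zero => rfl
  | succ e ih =>
    rw [ih (fun t ht => h t (by omega))]
    show (Psub I e).map (mkL J) = (Psub I (e + 1)).map (mkL J)
    rw [Psub_stall I (h e (by omega))]

lemma I_le_Ksub {d : ℕ} (h : ∀ t, t < d → Vsub I t = ⊥) :
    Submodule.restrictScalars ℂ I ≤ Ksub d := by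
  induction d with
  | zero => rw [Ksub_zero]; exact le_top
  | succ e ih =>
    intro p hp
    have hpe : p ∈ Ksub e := ih (fun t ht => h t (by omega)) hp
    have hmem : homogeneousComponent e p ∈ Vsub I e := ⟨p, ⟨hp, hpe⟩, rfl⟩
    rw [h e (by omega), Submodule.mem_bot] at hmem
    exact mem_Ksub_succ hpe hmem

end StmtAux

/-- If `𝔪·I ⊆ J ⊆ I` are ideals of `R = ℂ[x,y]` with `dim_ℂ R/J` finite,
`n = dim_ℂ R/I` and `r = dim_ℂ I/J`, then `n ≥ r(r-1)/2`. -/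
theorem stmt2 (I J : Ideal Rpoly) (hJI : J ≤ I) (hmJ : mIdeal * I ≤ J)
    (hfin : FiniteDimensional ℂ (Rpoly ⧸ J)) (n r : ℕ)
    (hn : Module.finrank ℂ (Rpoly ⧸ I) = n)
    (hr : relDim I J = r) :
    r * (r - 1) / 2 ≤ n := by
  classical
  open StmtAux in
  haveI := hfin
  haveI : FiniteDimensional ℂ (Rpoly ⧸ I) := quot_fd I J hJI
  obtain ⟨T0, hT0⟩ := exists_vanish I J hmJ
  have hr0 : Module.finrank ℂ ↥(Fsub I J 0) = r := by
    rw [Fsub_zero]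
    exact hr
  by_cases hcase : ∀ t, t < T0 → Vsub I t = ⊥
  · have h0 : Fsub I J 0 = ⊥ := (Fsub_eq_of_bot I J hcase).trans (hT0 T0 le_rfl)
    have hrz : r = 0 := by
      rw [← hr0, h0, finrank_bot]
    rw [hrz]
    simp
  · push_neg at hcase
    obtain ⟨t0, _, ht0⟩ := hcase
    have hex : ∃ d, Vsub I d ≠ ⊥ := ⟨t0, ht0⟩
    set d := Nat.find hex with hddef
    have hd : Vsub I d ≠ ⊥ := Nat.find_spec hex
    have hdmin : ∀ t, t < d → Vsub I t = ⊥ := fun t ht =>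
      not_ne_iff.mp (Nat.find_min hex ht)
    have hnb : d * (d + 1) / 2 ≤ n := hn ▸ n_bound I (I_le_Ksub I hdmin)
    have hgd : Module.finrank ℂ ↥(Fsub I J d) = r := by
      rw [← Fsub_eq_of_bot I J hdmin, hr0]
    set S := d + T0 with hSdef
    have hFS : Fsub I J (S + 1) = ⊥ := hT0 _ (by omega)
    have htel := telescope I J hJI d (S + 1) (by omega)
    rw [hFS, finrank_bot] at htel
    -- rewrite sums
    rw [Finset.sum_Ico_succ_top (by omega : d ≤ S)
      (fun t => Module.finrank ℂ ↥(Vsub I t))] at htel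
    -- lower bound for the w-sum
    have hws : (∑ t ∈ Finset.Ico d S, Module.finrank ℂ ↥(Vsub I t)) + (S - d) ≤
        ∑ t ∈ Finset.Ico d (S + 1), Module.finrank ℂ ↥(Vsub J t) := by
      have h2 : ∑ t ∈ Finset.Ico (d + 1) (S + 1), Module.finrank ℂ ↥(Vsub J t) =
          ∑ t ∈ Finset.Ico d S, Module.finrank ℂ ↥(Vsub J (t + 1)) := by
        rw [Finset.sum_Ico_eq_sum_range, Finset.sum_Ico_eq_sum_range]
        have hc : S + 1 - (d + 1) = S - d := by omega
        rw [hc]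
        exact Finset.sum_congr rfl (fun i _ => by
          have : d + 1 + i = d + i + 1 := by omega
          rw [this])
      have h3 : ∀ t ∈ Finset.Ico d S,
          Module.finrank ℂ ↥(Vsub I t) + 1 ≤ Module.finrank ℂ ↥(Vsub J (t + 1)) := by
        intro t ht
        have htge : d ≤ t := (Finset.mem_Ico.mp ht).1
        exact claim2 I J hmJ (Vsub_ne_bot_ge I hd htge)
      have h4 : ∑ t ∈ Finset.Ico d S, (Module.finrank ℂ ↥(Vsub I t) + 1) ≤
          ∑ t ∈ Finset.Ico d S, Module.finrank ℂ ↥(Vsub J (t + 1)) :=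
        Finset.sum_le_sum h3
      rw [Finset.sum_add_distrib, Finset.sum_const, Nat.card_Ico, smul_eq_mul, mul_one] at h4
      calc (∑ t ∈ Finset.Ico d S, Module.finrank ℂ ↥(Vsub I t)) + (S - d)
          ≤ ∑ t ∈ Finset.Ico d S, Module.finrank ℂ ↥(Vsub J (t + 1)) := h4
        _ = ∑ t ∈ Finset.Ico (d + 1) (S + 1), Module.finrank ℂ ↥(Vsub J t) := h2.symm
        _ ≤ ∑ t ∈ Finset.Ico d (S + 1), Module.finrank ℂ ↥(Vsub J t) :=
            Finset.sum_le_sum_of_subset (Finset.Ico_subset_Ico (by omega) le_rfl)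
    have hvS : Module.finrank ℂ ↥(Vsub I S) ≤ S + 1 := finrank_Vsub_le I S
    -- conclude r ≤ d + 1
    have hrd : r ≤ d + 1 := by
      rw [← hgd]
      omega
    calc r * (r - 1) / 2 ≤ (d + 1) * d / 2 :=
          Nat.div_le_div_right (Nat.mul_le_mul hrd (by omega))
      _ = d * (d + 1) / 2 := by rw [Nat.mul_comm]
      _ ≤ n := hnb

end
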